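/- Let F ∈ ℂ[x,y,z] be a homogeneous cubic of the form F = F₁(x,y)z² + F₂(x,y)z + F₃(x,y), where F_d is homogeneous of degree d in x, y (equivalently, F is a homogeneous cubic vanishing at b = (0:0:1)), and write G = ∂F/∂z. Define α̃ : ℂ³ → ℂ³ by α̃(v) = (v₁·G(v), v₂·G(v), v₃·G(v) − 2F(v)). Then for every v ∈ ℂ³ \ {0} with G(v) ≠ 0 and G(α̃(v)) ≠ 0, the vector α̃(α̃(v)) is a nonzero scalar multiple of v; that is, α̃ induces a birational involution of the projective plane ℙ²(ℂ): the points [α̃(α̃(v))] and [v] coincide in ℙ²(ℂ). (Existence part of Lemma 4.3: the unique birational involution of ℙ² preserving the general line through b and fixing the general point of the cubic Γ = {F = 0} is given by (x:y:z) ↦ (x : y : z − 2F/F_z).) -/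

import Mathlib

/-! Statement 14 (existence part of Lemma 4.3): for a homogeneous cubic `F` vanishing at
`b = (0:0:1)` (i.e. `F = F₁z² + F₂z + F₃`), the map
`α̃(v) = (v₀·G(v), v₁·G(v), v₂·G(v) - 2F(v))`, with `G = ∂F/∂z`, induces a birational
involution of `ℙ²(ℂ)`: wherever defined, `α̃(α̃(v))` is a nonzero scalar multiple of `v`. -/

noncomputable section

open MvPolynomial

/-- The rational map `(x:y:z) ↦ (x : y : z - 2F/F_z)`, written on homogeneous coordinates. -/
def alphaTilde (F : MvPolynomial (Fin 3) ℂ) (v : Fin 3 → ℂ) : Fin 3 → ℂ :=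
  ![v 0 * eval v (pderiv 2 F), v 1 * eval v (pderiv 2 F),
    v 2 * eval v (pderiv 2 F) - 2 * eval v F]

namespace Stmt14Aux

lemma degree_eq_sum (d : Fin 3 →₀ ℕ) : d.degree = d 0 + d 1 + d 2 := by
  rw [Finsupp.degree_apply, Finset.sum_subset (Finset.subset_univ _)
    (fun i _ hi => Finsupp.notMem_support_iff.mp hi), Fin.sum_univ_three]

lemma eval_smul_of_isHomogeneous {n : ℕ} {φ : MvPolynomial (Fin 3) ℂ}
    (hφ : φ.IsHomogeneous n) (c : ℂ) (v : Fin 3 → ℂ) :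
    eval (c • v) φ = c ^ n * eval v φ := by
  rw [eval_eq', eval_eq', Finset.mul_sum]
  refine Finset.sum_congr rfl fun d hd => ?_
  have hdd : d 0 + d 1 + d 2 = n := by
    rw [← degree_eq_sum]
    by_contra h
    exact (mem_support_iff.mp hd) (hφ.coeff_eq_zero h)
  rw [Fin.prod_univ_three, Fin.prod_univ_three]
  simp only [Pi.smul_apply, smul_eq_mul, mul_pow]
  rw [← hdd]
  ring

lemma isHomogeneous_pderiv {m : ℕ} {φ : MvPolynomial (Fin 3) ℂ}
    (hφ : φ.IsHomogeneous (m + 1)) : (pderiv 2 φ).IsHomogeneous m := by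
  rw [φ.as_sum, map_sum]
  apply IsHomogeneous.sum
  intro d hd
  rw [pderiv_monomial]
  by_cases h2 : d 2 = 0
  · simp [h2]
    exact isHomogeneous_zero _ _ _
  · apply isHomogeneous_monomial
    have hdd : d.degree = m + 1 := by
      by_contra h
      exact (mem_support_iff.mp hd) (hφ.coeff_eq_zero h)
    rw [degree_eq_sum] at hdd
    rw [degree_eq_sum]
    simp [Finsupp.tsub_apply, Finsupp.single_apply]
    omega



def Phi (x y : ℂ) : MvPolynomial (Fin 3) ℂ →ₐ[ℂ] Polynomial ℂ :=
  aeval ![Polynomial.C x, Polynomial.C y, Polynomial.X]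

lemma eval_Phi (x y t : ℂ) (f : MvPolynomial (Fin 3) ℂ) :
    (Phi x y f).eval t = eval ![x, y, t] f := by
  induction f using MvPolynomial.induction_on with
  | C a => simp [Phi]
  | add f g hf hg => simp [map_add, hf, hg]
  | mul_X f i hf =>
    rw [map_mul, Polynomial.eval_mul, hf, eval_mul]
    congr 1
    rw [Phi, aeval_X, eval_X]
    fin_cases i <;> simp

lemma derivative_Phi (x y : ℂ) (f : MvPolynomial (Fin 3) ℂ) :
    Polynomial.derivative (Phi x y f) = Phi x y (pderiv 2 f) := by
  induction f using MvPolynomial.induction_on with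
  | C a => simp [Phi]
  | add f g hf hg => simp [map_add, hf, hg]
  | mul_X f i hf =>
    rw [map_mul, pderiv_mul, Polynomial.derivative_mul, hf, map_add, map_mul, map_mul]
    fin_cases i <;>
      simp [Phi, pderiv_X, Pi.single_apply] <;> ring

lemma coeff_single23 {F : MvPolynomial (Fin 3) ℂ} (hF : F.IsHomogeneous 3)
    (hFb : eval (fun i : Fin 3 => if i = 2 then (1 : ℂ) else 0) F = 0) :
    coeff (Finsupp.single 2 3) F = 0 := by
  have key : eval (fun i : Fin 3 => if i = 2 then (1 : ℂ) else 0) F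
      = coeff (Finsupp.single 2 3) F := by
    rw [eval_eq']
    rw [Finset.sum_eq_single (Finsupp.single (2 : Fin 3) 3)]
    · rw [Fin.prod_univ_three]
      simp [Finsupp.single_apply]
    · intro d hd hne
      have hdd : d 0 + d 1 + d 2 = 3 := by
        rw [← degree_eq_sum]
        by_contra h
        exact (mem_support_iff.mp hd) (hF.coeff_eq_zero h)
      have h01 : d 0 ≠ 0 ∨ d 1 ≠ 0 := by
        by_contra h
        push_neg at h
        apply hne
        ext i
        fin_cases i <;> simp [Finsupp.single_apply] <;> omega
      rw [Fin.prod_univ_three]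
      rcases h01 with h | h <;> simp [zero_pow h]
    · intro h
      rw [notMem_support_iff.mp h, zero_mul]
  rw [key] at hFb
  exact hFb

lemma natDegree_Phi_le (x y : ℂ) {F : MvPolynomial (Fin 3) ℂ} (hF : F.IsHomogeneous 3)
    (h3 : coeff (Finsupp.single 2 3) F = 0) : (Phi x y F).natDegree ≤ 2 := by
  rw [F.as_sum, map_sum]
  apply Polynomial.natDegree_sum_le_of_forall_le
  intro d hd
  have hdd : d 0 + d 1 + d 2 = 3 := by
    rw [← degree_eq_sum]
    by_contra h
    exact (mem_support_iff.mp hd) (hF.coeff_eq_zero h)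
  have hd2 : d 2 ≤ 2 := by
    by_contra h
    have : d = Finsupp.single 2 3 := by
      ext i
      fin_cases i <;> simp [Finsupp.single_apply] <;> omega
    rw [this] at hd
    exact (mem_support_iff.mp hd) h3
  have hmono : Phi x y (monomial d (coeff d F))
      = Polynomial.C (coeff d F * x ^ d 0 * y ^ d 1) * Polynomial.X ^ d 2 := by
    rw [Phi, aeval_monomial, Finsupp.prod_fintype _ _ (fun i => pow_zero _),
      Fin.prod_univ_three]
    simp [map_mul, map_pow, mul_assoc, mul_comm, mul_left_comm]
  rw [hmono]
  refine (Polynomial.natDegree_C_mul_le _ _).trans ?_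
  simpa using hd2

lemma taylor_eval {q : Polynomial ℂ} (hq : q.natDegree ≤ 2) (z s : ℂ) :
    q.eval s = q.eval z + (Polynomial.derivative q).eval z * (s - z)
      + q.coeff 2 * (s - z) ^ 2 := by
  have h3 : q.natDegree < 3 := by omega
  have hd : (Polynomial.derivative q).natDegree < 3 :=
    lt_of_le_of_lt (Polynomial.natDegree_derivative_le q) (by omega)
  rw [Polynomial.eval_eq_sum_range' h3, Polynomial.eval_eq_sum_range' h3 z,
    Polynomial.eval_eq_sum_range' hd z]
  have hc3 : q.coeff 3 = 0 := Polynomial.coeff_eq_zero_of_natDegree_lt (by omega)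
  simp only [Finset.sum_range_succ, Finset.sum_range_zero, Polynomial.coeff_derivative, hc3]
  push_cast
  ring

lemma taylor_deriv_eval {q : Polynomial ℂ} (hq : q.natDegree ≤ 2) (z s : ℂ) :
    (Polynomial.derivative q).eval s
      = (Polynomial.derivative q).eval z + 2 * q.coeff 2 * (s - z) := by
  have hd : (Polynomial.derivative q).natDegree < 3 :=
    lt_of_le_of_lt (Polynomial.natDegree_derivative_le q) (by omega)
  rw [Polynomial.eval_eq_sum_range' hd, Polynomial.eval_eq_sum_range' hd z]
  simp only [Finset.sum_range_succ, Finset.sum_range_zero, Polynomial.coeff_derivative]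
  have h3 : q.coeff 3 = 0 := Polynomial.coeff_eq_zero_of_natDegree_lt (by omega)
  rw [h3]
  push_cast
  ring

end Stmt14Aux


open Stmt14Aux in
theorem stmt14 (F : MvPolynomial (Fin 3) ℂ) (hF : F.IsHomogeneous 3)
    (hFb : eval (fun i : Fin 3 => if i = 2 then (1 : ℂ) else 0) F = 0) :
    ∀ v : Fin 3 → ℂ, v ≠ 0 → eval v (pderiv 2 F) ≠ 0 →
      eval (alphaTilde F v) (pderiv 2 F) ≠ 0 →
      ∃ c : ℂ, c ≠ 0 ∧ alphaTilde F (alphaTilde F v) = c • v := by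
  intro v hv hg hgw
  set g : ℂ := eval v (pderiv 2 F) with hg_def
  set f : ℂ := eval v F with hf_def
  set q : Polynomial ℂ := Phi (v 0) (v 1) F with hq_def
  have hv3 : ![v 0, v 1, v 2] = v := by
    funext i; fin_cases i <;> rfl
  have hq1 : ∀ t, q.eval t = eval ![v 0, v 1, t] F := fun t => eval_Phi _ _ _ _
  have hq2 : ∀ t, (Polynomial.derivative q).eval t = eval ![v 0, v 1, t] (pderiv 2 F) := by
    intro t
    rw [hq_def, derivative_Phi]
    exact eval_Phi _ _ _ _
  have hdeg : q.natDegree ≤ 2 := natDegree_Phi_le _ _ hF (coeff_single23 hF hFb)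
  set c2 : ℂ := q.coeff 2 with hc2_def
  set z : ℂ := v 2 with hz_def
  set z' : ℂ := z - 2 * f / g with hz'_def
  have hfz : q.eval z = f := by rw [hq1, hz_def, hv3]
  have hgz : (Polynomial.derivative q).eval z = g := by rw [hq2, hz_def, hv3]
  have hqz' : q.eval z' = f + g * (z' - z) + c2 * (z' - z) ^ 2 := by
    rw [← hfz, ← hgz]; exact taylor_eval hdeg z z'
  have hdz' : (Polynomial.derivative q).eval z' = g + 2 * c2 * (z' - z) := by
    rw [← hgz]; exact taylor_deriv_eval hdeg z z'
  have hF' : (pderiv 2 F).IsHomogeneous 2 := isHomogeneous_pderiv (m := 2) hF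
  have hA : alphaTilde F v = ![v 0 * g, v 1 * g, v 2 * g - 2 * f] := rfl
  have hw : alphaTilde F v = g • ![v 0, v 1, z'] := by
    have hsm : g • ![v 0, v 1, z'] = ![g * v 0, g * v 1, g * z'] := by
      funext i; fin_cases i <;> simp
    rw [hA, hsm]
    funext i
    fin_cases i
    · simp [mul_comm]
    · simp [mul_comm]
    · simp only [Fin.isValue, Matrix.cons_val_two, Matrix.tail_cons, Matrix.head_cons]
      rw [hz'_def]
      field_simp
      rfl
  have hFw : eval (alphaTilde F v) F = g ^ 3 * q.eval z' := by
    rw [hw, eval_smul_of_isHomogeneous hF, hq1]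
  have hGw : eval (alphaTilde F v) (pderiv 2 F) = g ^ 2 * (Polynomial.derivative q).eval z' := by
    rw [hw, eval_smul_of_isHomogeneous hF', hq2]
  refine ⟨g * eval (alphaTilde F v) (pderiv 2 F), mul_ne_zero hg hgw, ?_⟩
  have hGw' : eval (alphaTilde F v) (pderiv 2 F) = g ^ 3 - 4 * c2 * f * g := by
    rw [hGw, hdz', hz'_def]
    field_simp
    ring
  have hFw' : eval (alphaTilde F v) F = -f * g ^ 3 + 4 * c2 * f ^ 2 * g := by
    rw [hFw, hqz', hz'_def]
    field_simp
    ring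
  have hw0 : alphaTilde F v 0 = v 0 * g := rfl
  have hw1 : alphaTilde F v 1 = v 1 * g := rfl
  have hw2 : alphaTilde F v 2 = v 2 * g - 2 * f := rfl
  have houter : alphaTilde F (alphaTilde F v)
      = ![alphaTilde F v 0 * eval (alphaTilde F v) (pderiv 2 F),
          alphaTilde F v 1 * eval (alphaTilde F v) (pderiv 2 F),
          alphaTilde F v 2 * eval (alphaTilde F v) (pderiv 2 F)
            - 2 * eval (alphaTilde F v) F] := rfl
  have hsv : (g * eval (alphaTilde F v) (pderiv 2 F)) • v
      = ![g * (g ^ 3 - 4 * c2 * f * g) * v 0, g * (g ^ 3 - 4 * c2 * f * g) * v 1,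
          g * (g ^ 3 - 4 * c2 * f * g) * v 2] := by
    funext i
    fin_cases i <;> simp [hGw'] <;> ring
  rw [hsv, houter, hw0, hw1, hw2, hGw', hFw']
  funext i
  fin_cases i <;> simp <;> ring
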